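/- arXiv:2110.09629 — 2 statements merged into one kernel-verified Lean document; each statement's English description precedes it below -/
import Mathlib

section
/- Let $p$ be an odd prime, let $u$, $v$ be positive integers, and let $s$, $t$ be integers not divisible by $p$. Then for every integer $r \ge 2$, $U(s;u,p^{r+1})\,U(t;v,p^{r+1}) \equiv p^2\, U(s;u,p^r)\,U(t;v,p^r) \pmod{p^{2r+2}}$. -/
open Finset

/-- `U(s; u, p^r) = ∑_{k=0}^{u p^{r-1} - 1} 1/(kp + s)`. -/
def U (p : ℕ) (s : ℤ) (u r : ℕ) : ℚ :=
  ∑ k ∈ Finset.range (u * p ^ (r - 1)), 1 / ((k : ℚ) * (p : ℚ) + (s : ℚ))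

section Aux

/-- Reindexing a sum over `range (N * q)` as a double sum. -/
lemma sum_range_mul' {M : Type*} [AddCommMonoid M] (f : ℕ → M) (N q : ℕ) :
    ∑ k ∈ range (N * q), f k = ∑ m ∈ range q, ∑ j ∈ range N, f (m * N + j) := by
  induction q with
  | zero => simp
  | succ q ih =>
      rw [Nat.mul_succ, Finset.sum_range_add, ih, Finset.sum_range_succ]
      congr 1
      exact Finset.sum_congr rfl fun j _ => by rw [Nat.mul_comm q N]

variable {p : ℕ} [hp : Fact p.Prime]

lemma norm_int_unit {s : ℤ} (hs : ¬ (p : ℤ) ∣ s) : ‖(s : ℚ_[p])‖ = 1 :=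
  le_antisymm (Padic.norm_int_le_one s)
    (not_lt.mp (fun h => hs (Padic.norm_intCast_lt_one_iff.mp h)))

lemma norm_unit_add {s : ℤ} (hs : ¬ (p : ℤ) ∣ s) {x : ℚ_[p]} (hx : ‖x‖ < 1) :
    ‖(s : ℚ_[p]) + x‖ = 1 := by
  have h1 : ‖(s : ℚ_[p])‖ = 1 := norm_int_unit hs
  have hne : ‖(s : ℚ_[p])‖ ≠ ‖x‖ := by rw [h1]; exact (ne_of_lt hx).symm
  rw [Padic.add_eq_max_of_ne hne, h1]
  exact max_eq_left (le_of_lt (h1 ▸ hx))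

/-- Norm of `(k : ℚ_[p]) * p + s` is 1. -/
lemma norm_term_unit {s : ℤ} (hs : ¬ (p : ℤ) ∣ s) (k : ℕ) :
    ‖(k : ℚ_[p]) * p + s‖ = 1 := by
  rw [add_comm]
  apply norm_unit_add hs
  calc ‖(k : ℚ_[p]) * p‖ = ‖(k : ℚ_[p])‖ * ‖(p : ℚ_[p])‖ := norm_mul _ _
    _ ≤ 1 * (p : ℝ)⁻¹ := by
        rw [Padic.norm_p]
        exact mul_le_mul_of_nonneg_right (Padic.norm_int_le_one (k : ℤ)) (by positivity)
    _ < 1 := by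
        rw [one_mul]
        exact inv_lt_one_of_one_lt₀ (by exact_mod_cast hp.out.one_lt)

lemma term_ne_zero {s : ℤ} (hs : ¬ (p : ℤ) ∣ s) (k : ℕ) :
    (k : ℚ_[p]) * p + s ≠ 0 := by
  intro h
  have := norm_term_unit hs k
  rw [h, norm_zero] at this
  norm_num at this

lemma norm_inv_term {s : ℤ} (hs : ¬ (p : ℤ) ∣ s) (k : ℕ) :
    ‖((k : ℚ_[p]) * p + s)⁻¹‖ = 1 := by
  rw [norm_inv, norm_term_unit hs k]
  norm_num

/-- the p-adic avatar of `U`. -/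
noncomputable def AA (p : ℕ) [Fact p.Prime] (s : ℤ) (u r : ℕ) : ℚ_[p] :=
  ∑ k ∈ range (u * p ^ (r - 1)), ((k : ℚ_[p]) * p + s)⁻¹

/-- sum of inverse squares. -/
noncomputable def BB (p : ℕ) [Fact p.Prime] (s : ℤ) (u r : ℕ) : ℚ_[p] :=
  ∑ k ∈ range (u * p ^ (r - 1)), (((k : ℚ_[p]) * p + s)⁻¹) ^ 2

lemma U_cast (s : ℤ) (u r : ℕ) : ((U p s u r : ℚ) : ℚ_[p]) = AA p s u r := by
  unfold U AA
  push_cast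
  refine Finset.sum_congr rfl fun k _ => ?_
  rw [one_div]

end Aux

section Main

variable {p : ℕ} [hp : Fact p.Prime]

set_option linter.unusedSectionVars false

lemma norm_le_one_of_lt_one : (1 : ℝ) < p := by exact_mod_cast hp.out.one_lt

lemma ppow_le_ppow {a b : ℤ} (h : a ≤ b) : ((p : ℝ)) ^ (-b) ≤ (p : ℝ) ^ (-a) :=
  zpow_le_zpow_right₀ (le_of_lt norm_le_one_of_lt_one) (neg_le_neg h)


lemma norm_natCast_le {e n : ℕ} (h : p ^ e ∣ n) : ‖(n : ℚ_[p])‖ ≤ (p : ℝ) ^ (-(e : ℤ)) := by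
  have h2 : ((n : ℤ) : ℚ_[p]) = (n : ℚ_[p]) := by push_cast; ring
  rw [← h2]
  exact (Padic.norm_int_le_pow_iff_dvd _ _).mpr (by exact_mod_cast h)

lemma ppow_nonneg (a : ℤ) : (0:ℝ) ≤ (p : ℝ) ^ a :=
  zpow_nonneg (by positivity) a

lemma pR_pos : (0:ℝ) < (p:ℝ) := by exact_mod_cast hp.out.pos

lemma ppow_mul_inv (a : ℤ) : (p : ℝ) ^ (-a) * (p : ℝ)⁻¹ = (p : ℝ) ^ (-(a + 1)) := by
  rw [← zpow_neg_one, ← zpow_add₀ (pR_pos (p := p)).ne']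
  congr 1
  ring

/-- Step decomposition. -/
lemma step_eq (s : ℤ) (u r : ℕ) :
    AA p s u (r + 2) - (p : ℚ_[p]) * AA p s u (r + 1) =
      ∑ m ∈ range p, ∑ j ∈ range (u * p ^ r),
        (((((m * (u * p ^ r) + j : ℕ)) : ℚ_[p]) * p + s)⁻¹ - ((j : ℚ_[p]) * p + s)⁻¹) := by
  have h1 : AA p s u (r + 2) =
      ∑ m ∈ range p, ∑ j ∈ range (u * p ^ r),
        ((((m * (u * p ^ r) + j : ℕ)) : ℚ_[p]) * p + s)⁻¹ := by
    unfold AA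
    have h : u * p ^ (r + 2 - 1) = (u * p ^ r) * p := by
      show u * p ^ (r + 1) = _
      rw [pow_succ, mul_assoc]
    rw [h, sum_range_mul']
  have h2 : (p : ℚ_[p]) * AA p s u (r + 1) =
      ∑ m ∈ range p, ∑ j ∈ range (u * p ^ r), ((j : ℚ_[p]) * p + s)⁻¹ := by
    unfold AA
    rw [Finset.sum_const, Finset.card_range, nsmul_eq_mul]
    rfl
  rw [h1, h2, ← Finset.sum_sub_distrib]
  exact Finset.sum_congr rfl fun m _ => (Finset.sum_sub_distrib _ _).symm

/-- bound on the shift `c = m·u·p^r·p`. -/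
lemma norm_c_le (u r m : ℕ) :
    ‖((m * (u * p ^ r) : ℕ) : ℚ_[p]) * p‖ ≤ (p : ℝ) ^ (-(r + 1 : ℤ)) := by
  have h1 : ‖((m * (u * p ^ r) : ℕ) : ℚ_[p])‖ ≤ (p : ℝ) ^ (-(r : ℤ)) :=
    norm_natCast_le ⟨m * u, by ring⟩
  calc ‖((m * (u * p ^ r) : ℕ) : ℚ_[p]) * p‖
      = ‖((m * (u * p ^ r) : ℕ) : ℚ_[p])‖ * ‖(p : ℚ_[p])‖ := norm_mul _ _
    _ ≤ (p : ℝ) ^ (-(r : ℤ)) * (p : ℝ)⁻¹ := by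
        rw [Padic.norm_p]
        exact mul_le_mul_of_nonneg_right h1 (by positivity)
    _ = (p : ℝ) ^ (-(r + 1 : ℤ)) := ppow_mul_inv _

/-- algebraic splitting of the bracket. -/
lemma bracket_split {x y c : ℚ_[p]} (hx : x ≠ 0) (hy : y ≠ 0) (hxy : x = y + c) :
    x⁻¹ - y⁻¹ = -c * (x * y)⁻¹ := by
  field_simp
  rw [hxy]; ring

lemma bracket_split' {x y c : ℚ_[p]} (hx : x ≠ 0) (hy : y ≠ 0) (hxy : x = y + c) :
    x⁻¹ - y⁻¹ = -(c * (y⁻¹) ^ 2) + c ^ 2 * (y ^ 2 * x)⁻¹ := by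
  field_simp
  rw [hxy]; ring

/-- the shifted term rewrites as `y + c`. -/
lemma shift_eq (s : ℤ) (u r m j : ℕ) :
    (((m * (u * p ^ r) + j : ℕ)) : ℚ_[p]) * p + s =
      ((j : ℚ_[p]) * p + s) + ((m * (u * p ^ r) : ℕ) : ℚ_[p]) * p := by
  push_cast; ring

/-- coarse bound on the bracket. -/
lemma bracket_norm_le {s : ℤ} (hs : ¬ (p : ℤ) ∣ s) (u r m j : ℕ) :
    ‖((((m * (u * p ^ r) + j : ℕ)) : ℚ_[p]) * p + s)⁻¹ - ((j : ℚ_[p]) * p + s)⁻¹‖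
      ≤ (p : ℝ) ^ (-(r + 1 : ℤ)) := by
  rw [bracket_split (term_ne_zero hs _) (term_ne_zero hs _) (shift_eq s u r m j)]
  have h1 : ‖((((m * (u * p ^ r) + j : ℕ)) : ℚ_[p]) * p + s) * ((j : ℚ_[p]) * p + s)‖ = 1 := by
    rw [norm_mul, norm_term_unit hs, norm_term_unit hs, mul_one]
  rw [norm_mul, norm_neg, norm_inv, h1, inv_one, mul_one]
  exact norm_c_le u r m

/-- `‖AA p s u (r+1)‖ ≤ p^(-r)`. -/
lemma norm_AA_le {s : ℤ} (hs : ¬ (p : ℤ) ∣ s) (u : ℕ) :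
    ∀ r : ℕ, ‖AA p s u (r + 1)‖ ≤ (p : ℝ) ^ (-(r : ℤ)) := by
  intro r
  induction r with
  | zero =>
      simp only [Nat.cast_zero, neg_zero, zpow_zero]
      exact IsUltrametricDist.norm_sum_le_of_forall_le_of_nonneg zero_le_one
        (fun k _ => le_of_eq (norm_inv_term hs k))
  | succ n ih =>
      have hD : ‖AA p s u (n + 2) - (p : ℚ_[p]) * AA p s u (n + 1)‖
          ≤ (p : ℝ) ^ (-(n + 1 : ℤ)) := by
        rw [step_eq]
        exact IsUltrametricDist.norm_sum_le_of_forall_le_of_nonneg (ppow_nonneg _)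
          (fun m _ => IsUltrametricDist.norm_sum_le_of_forall_le_of_nonneg (ppow_nonneg _)
            (fun j _ => bracket_norm_le hs u n m j))
      have hP : ‖(p : ℚ_[p]) * AA p s u (n + 1)‖ ≤ (p : ℝ) ^ (-(n + 1 : ℤ)) := by
        rw [norm_mul, Padic.norm_p]
        calc (p:ℝ)⁻¹ * ‖AA p s u (n + 1)‖ ≤ (p:ℝ)⁻¹ * (p : ℝ) ^ (-(n : ℤ)) := by
              exact mul_le_mul_of_nonneg_left ih (by positivity)
          _ = (p : ℝ) ^ (-(n + 1 : ℤ)) := by rw [mul_comm]; exact ppow_mul_inv _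
      calc ‖AA p s u (n + 1 + 1)‖
          = ‖(AA p s u (n + 2) - (p : ℚ_[p]) * AA p s u (n + 1))
              + (p : ℚ_[p]) * AA p s u (n + 1)‖ := by rw [sub_add_cancel]
        _ ≤ max ‖AA p s u (n + 2) - (p : ℚ_[p]) * AA p s u (n + 1)‖
              ‖(p : ℚ_[p]) * AA p s u (n + 1)‖ := Padic.nonarchimedean _ _
        _ ≤ (p : ℝ) ^ (-(n + 1 : ℤ)) := max_le hD hP
        _ = (p : ℝ) ^ (-((n + 1 : ℕ) : ℤ)) := by norm_num


lemma ppow_sq (a : ℤ) : ((p : ℝ) ^ a) ^ 2 = (p : ℝ) ^ (2 * a) := by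
  rw [sq, ← zpow_add₀ (pR_pos (p := p)).ne']
  congr 1
  ring

lemma norm_mul_le_ppow {x y : ℚ_[p]} {a b : ℤ} (hx : ‖x‖ ≤ (p : ℝ) ^ a)
    (hy : ‖y‖ ≤ (p : ℝ) ^ b) : ‖x * y‖ ≤ (p : ℝ) ^ (a + b) := by
  rw [norm_mul, zpow_add₀ (pR_pos (p := p)).ne']
  exact mul_le_mul hx hy (norm_nonneg _) (ppow_nonneg _)

lemma norm_p_le' : ‖(p : ℚ_[p])‖ ≤ (p : ℝ) ^ (-1 : ℤ) := by
  rw [Padic.norm_p, zpow_neg_one]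

lemma norm_sub_le_max' (a b : ℚ_[p]) : ‖a - b‖ ≤ max ‖a‖ ‖b‖ := by
  rw [sub_eq_add_neg]
  simpa [norm_neg] using Padic.nonarchimedean a (-b)

/-- Step decomposition for `BB`. -/
lemma step_eq_BB (s : ℤ) (u r : ℕ) :
    BB p s u (r + 2) - (p : ℚ_[p]) * BB p s u (r + 1) =
      ∑ m ∈ range p, ∑ j ∈ range (u * p ^ r),
        (((((m * (u * p ^ r) + j : ℕ)) : ℚ_[p]) * p + s)⁻¹ ^ 2
          - (((j : ℚ_[p]) * p + s)⁻¹) ^ 2) := by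
  have h1 : BB p s u (r + 2) =
      ∑ m ∈ range p, ∑ j ∈ range (u * p ^ r),
        (((((m * (u * p ^ r) + j : ℕ)) : ℚ_[p]) * p + s)⁻¹) ^ 2 := by
    unfold BB
    have h : u * p ^ (r + 2 - 1) = (u * p ^ r) * p := by
      show u * p ^ (r + 1) = _
      rw [pow_succ, mul_assoc]
    rw [h, sum_range_mul']
  have h2 : (p : ℚ_[p]) * BB p s u (r + 1) =
      ∑ m ∈ range p, ∑ j ∈ range (u * p ^ r), (((j : ℚ_[p]) * p + s)⁻¹) ^ 2 := by
    unfold BB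
    rw [Finset.sum_const, Finset.card_range, nsmul_eq_mul]
    rfl
  rw [h1, h2, ← Finset.sum_sub_distrib]
  exact Finset.sum_congr rfl fun m _ => (Finset.sum_sub_distrib _ _).symm

lemma bracket2_norm_le {s : ℤ} (hs : ¬ (p : ℤ) ∣ s) (u r m j : ℕ) :
    ‖((((m * (u * p ^ r) + j : ℕ)) : ℚ_[p]) * p + s)⁻¹ ^ 2
        - (((j : ℚ_[p]) * p + s)⁻¹) ^ 2‖ ≤ (p : ℝ) ^ (-(r + 1 : ℤ)) := by
  have hfac : ((((m * (u * p ^ r) + j : ℕ)) : ℚ_[p]) * p + s)⁻¹ ^ 2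
      - (((j : ℚ_[p]) * p + s)⁻¹) ^ 2 =
      (((((m * (u * p ^ r) + j : ℕ)) : ℚ_[p]) * p + s)⁻¹ - ((j : ℚ_[p]) * p + s)⁻¹)
        * (((((m * (u * p ^ r) + j : ℕ)) : ℚ_[p]) * p + s)⁻¹ + ((j : ℚ_[p]) * p + s)⁻¹) := by
    ring
  rw [hfac, norm_mul]
  have h2 : ‖((((m * (u * p ^ r) + j : ℕ)) : ℚ_[p]) * p + s)⁻¹ + ((j : ℚ_[p]) * p + s)⁻¹‖ ≤ 1 := by
    refine le_trans (Padic.nonarchimedean _ _) (max_le ?_ ?_) <;>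
      exact le_of_eq (norm_inv_term hs _)
  calc ‖_‖ * ‖_‖ ≤ (p : ℝ) ^ (-(r + 1 : ℤ)) * 1 :=
        mul_le_mul (bracket_norm_le hs u r m j) h2 (norm_nonneg _) (ppow_nonneg _)
    _ = (p : ℝ) ^ (-(r + 1 : ℤ)) := mul_one _

/-- `‖BB p s u (r+1)‖ ≤ p^(-r)`. -/
lemma norm_BB_le {s : ℤ} (hs : ¬ (p : ℤ) ∣ s) (u : ℕ) :
    ∀ r : ℕ, ‖BB p s u (r + 1)‖ ≤ (p : ℝ) ^ (-(r : ℤ)) := by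
  intro r
  induction r with
  | zero =>
      simp only [Nat.cast_zero, neg_zero, zpow_zero]
      refine IsUltrametricDist.norm_sum_le_of_forall_le_of_nonneg zero_le_one
        (fun k _ => ?_)
      rw [norm_pow, norm_inv_term hs k, one_pow]
  | succ n ih =>
      have hD : ‖BB p s u (n + 2) - (p : ℚ_[p]) * BB p s u (n + 1)‖
          ≤ (p : ℝ) ^ (-(n + 1 : ℤ)) := by
        rw [step_eq_BB]
        exact IsUltrametricDist.norm_sum_le_of_forall_le_of_nonneg (ppow_nonneg _)
          (fun m _ => IsUltrametricDist.norm_sum_le_of_forall_le_of_nonneg (ppow_nonneg _)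
            (fun j _ => bracket2_norm_le hs u n m j))
      have hP : ‖(p : ℚ_[p]) * BB p s u (n + 1)‖ ≤ (p : ℝ) ^ (-(n + 1 : ℤ)) := by
        have := norm_mul_le_ppow (norm_p_le' (p := p)) ih
        calc ‖(p : ℚ_[p]) * BB p s u (n + 1)‖ ≤ (p : ℝ) ^ (-1 + -(n : ℤ)) := this
          _ = (p : ℝ) ^ (-(n + 1 : ℤ)) := by congr 1; ring
      calc ‖BB p s u (n + 1 + 1)‖
          = ‖(BB p s u (n + 2) - (p : ℚ_[p]) * BB p s u (n + 1))
              + (p : ℚ_[p]) * BB p s u (n + 1)‖ := by rw [sub_add_cancel]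
        _ ≤ max ‖BB p s u (n + 2) - (p : ℚ_[p]) * BB p s u (n + 1)‖
              ‖(p : ℚ_[p]) * BB p s u (n + 1)‖ := Padic.nonarchimedean _ _
        _ ≤ (p : ℝ) ^ (-(n + 1 : ℤ)) := max_le hD hP
        _ = (p : ℝ) ^ (-((n + 1 : ℕ) : ℤ)) := by norm_num

/-- refined splitting of the bracket. -/
lemma bracket_split2 {x y c : ℚ_[p]} (hx : x ≠ 0) (hy : y ≠ 0) (hxy : x = y + c) :
    x⁻¹ - y⁻¹ = c ^ 2 * (y ^ 2 * x)⁻¹ - c * (y⁻¹) ^ 2 := by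
  field_simp
  rw [hxy]; ring

/-- Gauss: `p ∣ ∑_{m<p} m` for odd `p`. -/
lemma p_dvd_gauss (hodd : Odd p) : p ∣ ∑ m ∈ range p, m := by
  have hg : (∑ m ∈ range p, m) * 2 = p * (p - 1) := Finset.sum_range_id_mul_two p
  have h2 : p ∣ (∑ m ∈ range p, m) * 2 := hg ▸ dvd_mul_right p (p - 1)
  rcases (Nat.Prime.dvd_mul hp.out).mp h2 with h | h
  · exact h
  · exfalso
    have := (Nat.prime_dvd_prime_iff_eq hp.out Nat.prime_two).mp h
    rw [this] at hodd
    exact (by decide : ¬ Odd 2) hodd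

/-- main bound on `D = AA(r+2) - p·AA(r+1)`. -/
lemma norm_D_le {s : ℤ} (hs : ¬ (p : ℤ) ∣ s) (hodd : Odd p) (u r : ℕ) :
    ‖AA p s u (r + 2) - (p : ℚ_[p]) * AA p s u (r + 1)‖
      ≤ (p : ℝ) ^ (-(2 * r + 2 : ℤ)) := by
  rw [step_eq]
  have hBB : BB p s u (r + 1) = ∑ j ∈ range (u * p ^ r), (((j : ℚ_[p]) * p + s)⁻¹) ^ 2 := rfl
  have h1 : (∑ m ∈ range p, ∑ j ∈ range (u * p ^ r),
        (((((m * (u * p ^ r) + j : ℕ)) : ℚ_[p]) * p + s)⁻¹ - ((j : ℚ_[p]) * p + s)⁻¹))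
      = (∑ m ∈ range p, ∑ j ∈ range (u * p ^ r),
          ((((m * (u * p ^ r) : ℕ) : ℚ_[p]) * p) ^ 2 *
            ((((j : ℚ_[p]) * p + s) ^ 2) *
              ((((m * (u * p ^ r) + j : ℕ)) : ℚ_[p]) * p + s))⁻¹))
        - (((∑ m ∈ range p, m * (u * p ^ r) : ℕ) : ℚ_[p]) * p) * BB p s u (r + 1) := by
    calc (∑ m ∈ range p, ∑ j ∈ range (u * p ^ r),
        (((((m * (u * p ^ r) + j : ℕ)) : ℚ_[p]) * p + s)⁻¹ - ((j : ℚ_[p]) * p + s)⁻¹))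
        = ∑ m ∈ range p, ∑ j ∈ range (u * p ^ r),
            (((((m * (u * p ^ r) : ℕ) : ℚ_[p]) * p) ^ 2 *
              ((((j : ℚ_[p]) * p + s) ^ 2) *
                ((((m * (u * p ^ r) + j : ℕ)) : ℚ_[p]) * p + s))⁻¹)
              - (((m * (u * p ^ r) : ℕ) : ℚ_[p]) * p) * (((j : ℚ_[p]) * p + s)⁻¹) ^ 2) := by
          refine Finset.sum_congr rfl fun m _ => Finset.sum_congr rfl fun j _ => ?_
          exact bracket_split2 (term_ne_zero hs _) (term_ne_zero hs _) (shift_eq s u r m j)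
      _ = (∑ m ∈ range p, ∑ j ∈ range (u * p ^ r),
            ((((m * (u * p ^ r) : ℕ) : ℚ_[p]) * p) ^ 2 *
              ((((j : ℚ_[p]) * p + s) ^ 2) *
                ((((m * (u * p ^ r) + j : ℕ)) : ℚ_[p]) * p + s))⁻¹))
          - ∑ m ∈ range p, ((((m * (u * p ^ r) : ℕ) : ℚ_[p]) * p) * BB p s u (r + 1)) := by
          rw [← Finset.sum_sub_distrib]
          refine Finset.sum_congr rfl fun m _ => ?_
          rw [Finset.sum_sub_distrib]
          congr 1
          rw [hBB, Finset.mul_sum]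
      _ = _ := by
          congr 1
          rw [← Finset.sum_mul, ← Finset.sum_mul, Nat.cast_sum]
  rw [h1]
  have hcnorm : ∀ m : ℕ, ‖((m * (u * p ^ r) : ℕ) : ℚ_[p]) * p‖ ≤ (p : ℝ) ^ (-(r + 1 : ℤ)) :=
    norm_c_le u r
  have hE : ‖∑ m ∈ range p, ∑ j ∈ range (u * p ^ r),
        ((((m * (u * p ^ r) : ℕ) : ℚ_[p]) * p) ^ 2 *
          ((((j : ℚ_[p]) * p + s) ^ 2) *
            ((((m * (u * p ^ r) + j : ℕ)) : ℚ_[p]) * p + s))⁻¹)‖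
      ≤ (p : ℝ) ^ (-(2 * r + 2 : ℤ)) := by
    refine IsUltrametricDist.norm_sum_le_of_forall_le_of_nonneg (ppow_nonneg _)
      (fun m _ => IsUltrametricDist.norm_sum_le_of_forall_le_of_nonneg (ppow_nonneg _)
        (fun j _ => ?_))
    have hinv : ‖((((j : ℚ_[p]) * p + s) ^ 2) *
        ((((m * (u * p ^ r) + j : ℕ)) : ℚ_[p]) * p + s))⁻¹‖ = 1 := by
      rw [norm_inv, norm_mul, norm_pow, norm_term_unit hs, norm_term_unit hs]
      norm_num
    have hsq : ((p : ℝ) ^ (-(r + 1 : ℤ))) ^ 2 = (p : ℝ) ^ (-(2 * r + 2 : ℤ)) := by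
      rw [ppow_sq]
      congr 1 <;> ring
    rw [norm_mul, hinv, mul_one, norm_pow, ← hsq]
    exact pow_le_pow_left₀ (norm_nonneg _) (hcnorm m) 2
  have hM : ‖(((∑ m ∈ range p, m * (u * p ^ r) : ℕ) : ℚ_[p]) * p) * BB p s u (r + 1)‖
      ≤ (p : ℝ) ^ (-(2 * r + 2 : ℤ)) := by
    obtain ⟨k, hk⟩ := p_dvd_gauss (p := p) hodd
    have hdvd : p ^ (r + 1) ∣ ∑ m ∈ range p, m * (u * p ^ r) := by
      rw [← Finset.sum_mul, hk]
      exact ⟨k * u, by ring⟩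
    have hn1 : ‖((∑ m ∈ range p, m * (u * p ^ r) : ℕ) : ℚ_[p])‖
        ≤ (p : ℝ) ^ (-(r + 1 : ℕ) : ℤ) := norm_natCast_le hdvd
    have hstep : ‖(((∑ m ∈ range p, m * (u * p ^ r) : ℕ) : ℚ_[p]) * p) * BB p s u (r + 1)‖
        ≤ (p : ℝ) ^ ((-(r + 1 : ℕ) : ℤ) + -1 + -(r : ℤ)) :=
      norm_mul_le_ppow (norm_mul_le_ppow hn1 (norm_p_le' (p := p))) (norm_BB_le hs u r)
    calc ‖_‖ ≤ (p : ℝ) ^ ((-(r + 1 : ℕ) : ℤ) + -1 + -(r : ℤ)) := hstep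
      _ = (p : ℝ) ^ (-(2 * r + 2 : ℤ)) := by congr 1; push_cast; ring
  exact le_trans (norm_sub_le_max' _ _) (max_le hE hM)

/-- bridge: a norm bound on the `p`-adic cast gives divisibility of the numerator. -/
lemma num_dvd_of_norm_le {x : ℚ} {n : ℕ} (h : ‖(x : ℚ_[p])‖ ≤ (p : ℝ) ^ (-(n : ℤ))) :
    (p : ℤ) ^ n ∣ x.num := by
  have hx : ((x.num : ℤ) : ℚ_[p]) = (x : ℚ_[p]) * ((x.den : ℤ) : ℚ_[p]) := by
    have h0 : (x : ℚ) * (x.den : ℚ) = (x.num : ℚ) := Rat.mul_den_eq_num x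
    have h1 : ((x * (x.den : ℚ) : ℚ) : ℚ_[p]) = (((x.num : ℚ)) : ℚ_[p]) := by rw [h0]
    push_cast at h1
    exact h1.symm
  have hd : ‖((x.den : ℤ) : ℚ_[p])‖ ≤ 1 := Padic.norm_int_le_one _
  have key : ‖((x.num : ℤ) : ℚ_[p])‖ ≤ (p : ℝ) ^ (-(n : ℤ)) := by
    rw [hx, norm_mul]
    calc ‖(x : ℚ_[p])‖ * ‖((x.den : ℤ) : ℚ_[p])‖ ≤ (p : ℝ) ^ (-(n : ℤ)) * 1 :=
          mul_le_mul h hd (norm_nonneg _) (ppow_nonneg _)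
      _ = (p : ℝ) ^ (-(n : ℤ)) := mul_one _
  have := (Padic.norm_int_le_pow_iff_dvd x.num n).mp key
  exact_mod_cast this

end Main

/-- **Lemma 2.3(c).** For `r ≥ 2`,
`U(s;u,p^{r+1})·U(t;v,p^{r+1}) ≡ p²·U(s;u,p^r)·U(t;v,p^r) (mod p^{2r+2})`. -/
theorem U_product_step_congruence
    (p u v : ℕ) (s t : ℤ)
    (hp : p.Prime) (hpodd : Odd p) (hu : 0 < u) (hv : 0 < v)
    (hps : ¬ (p : ℤ) ∣ s) (hpt : ¬ (p : ℤ) ∣ t) :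
    ∀ r : ℕ, 2 ≤ r →
      (p : ℤ) ^ (2 * r + 2) ∣
        (U p s u (r + 1) * U p t v (r + 1) -
          (p : ℚ) ^ 2 * (U p s u r * U p t v r)).num := by
  haveI hfact : Fact p.Prime := ⟨hp⟩
  intro r hr
  obtain ⟨n, rfl⟩ : ∃ n, r = n + 2 := ⟨r - 2, by omega⟩
  apply num_dvd_of_norm_le (p := p)
  have hcast : ((U p s u (n + 2 + 1) * U p t v (n + 2 + 1) -
      (p : ℚ) ^ 2 * (U p s u (n + 2) * U p t v (n + 2)) : ℚ) : ℚ_[p])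
      = AA p s u (n + 3) * AA p t v (n + 3)
        - (p : ℚ_[p]) ^ 2 * (AA p s u (n + 2) * AA p t v (n + 2)) := by
    simp only [Rat.cast_sub, Rat.cast_mul, Rat.cast_pow, Rat.cast_natCast, U_cast]
  rw [hcast]
  have key : AA p s u (n + 3) * AA p t v (n + 3)
        - (p : ℚ_[p]) ^ 2 * (AA p s u (n + 2) * AA p t v (n + 2))
      = ((p : ℚ_[p]) * AA p s u (n + 2)) * (AA p t v (n + 3) - p * AA p t v (n + 2))
        + (AA p s u (n + 3) - p * AA p s u (n + 2)) * ((p : ℚ_[p]) * AA p t v (n + 2))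
        + (AA p s u (n + 3) - p * AA p s u (n + 2))
            * (AA p t v (n + 3) - p * AA p t v (n + 2)) := by
    ring
  rw [key]
  have hA2 : ‖AA p s u (n + 2)‖ ≤ (p : ℝ) ^ (-((n + 1 : ℕ) : ℤ)) := norm_AA_le hps u (n + 1)
  have hB2 : ‖AA p t v (n + 2)‖ ≤ (p : ℝ) ^ (-((n + 1 : ℕ) : ℤ)) := norm_AA_le hpt v (n + 1)
  have hDs : ‖AA p s u (n + 3) - (p : ℚ_[p]) * AA p s u (n + 2)‖
      ≤ (p : ℝ) ^ (-(2 * ((n + 1 : ℕ) : ℤ) + 2)) := norm_D_le hps hpodd u (n + 1)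
  have hDt : ‖AA p t v (n + 3) - (p : ℚ_[p]) * AA p t v (n + 2)‖
      ≤ (p : ℝ) ^ (-(2 * ((n + 1 : ℕ) : ℤ) + 2)) := norm_D_le hpt hpodd v (n + 1)
  have hexp : (-1 + -((n + 1 : ℕ) : ℤ)) + (-(2 * ((n + 1 : ℕ) : ℤ) + 2))
      ≤ -((2 * (n + 2) + 2 : ℕ) : ℤ) := by push_cast; omega
  have hexp2 : (-(2 * ((n + 1 : ℕ) : ℤ) + 2)) + (-(2 * ((n + 1 : ℕ) : ℤ) + 2))
      ≤ -((2 * (n + 2) + 2 : ℕ) : ℤ) := by push_cast; omega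
  have hT1 : ‖((p : ℚ_[p]) * AA p s u (n + 2))
        * (AA p t v (n + 3) - (p : ℚ_[p]) * AA p t v (n + 2))‖
      ≤ (p : ℝ) ^ (-((2 * (n + 2) + 2 : ℕ) : ℤ)) :=
    le_trans (norm_mul_le_ppow (norm_mul_le_ppow (norm_p_le' (p := p)) hA2) hDt)
      (by
        refine zpow_le_zpow_right₀ (le_of_lt norm_le_one_of_lt_one) hexp)
  have hT2 : ‖(AA p s u (n + 3) - (p : ℚ_[p]) * AA p s u (n + 2))
        * ((p : ℚ_[p]) * AA p t v (n + 2))‖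
      ≤ (p : ℝ) ^ (-((2 * (n + 2) + 2 : ℕ) : ℤ)) := by
    refine le_trans (norm_mul_le_ppow hDs (norm_mul_le_ppow (norm_p_le' (p := p)) hB2)) ?_
    refine zpow_le_zpow_right₀ (le_of_lt norm_le_one_of_lt_one) ?_
    push_cast
    omega
  have hT3 : ‖(AA p s u (n + 3) - (p : ℚ_[p]) * AA p s u (n + 2))
        * (AA p t v (n + 3) - (p : ℚ_[p]) * AA p t v (n + 2))‖
      ≤ (p : ℝ) ^ (-((2 * (n + 2) + 2 : ℕ) : ℤ)) :=
    le_trans (norm_mul_le_ppow hDs hDt)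
      (zpow_le_zpow_right₀ (le_of_lt norm_le_one_of_lt_one) hexp2)
  refine le_trans (Padic.nonarchimedean _ _) (max_le ?_ hT3)
  exact le_trans (Padic.nonarchimedean _ _) (max_le hT1 hT2)
end

section
/- Let $p$ be an odd prime, let $u$, $v$ be positive integers, and let $s$, $t$ be integers not divisible by $p$. Then for every integer $r \ge 2$: if $p \ge 5$, then $U(s;u,p^r)\,U(t;v,p^r) \equiv u v s^{-1} t^{-1} p^{2r-2} + \tfrac{1}{2}(u v s^{-1} t^{-2} + u v s^{-2} t^{-1}) p^{2r-1} \pmod{p^{2r}}$; and if $p = 3$, then $U(s;u,3^r)\,U(t;v,3^r) \equiv u v s^{-1} t^{-1} 3^{2r-2} + \tfrac{1}{2}(u v s^{-1} t^{-3}(t+1) + u v s^{-3}(s+1) t^{-1}) \, 3^{2r-1} \pmod{3^{2r}}$. Here $s^{-1}$, $t^{-1}$ etc. denote rational inverses. -/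
open Finset

def DD (p : ℕ) (m : ℕ) (x : ℚ) : Prop :=
  ∃ a b : ℤ, ¬((p:ℤ) ∣ b) ∧ x * (b:ℚ) = (p:ℚ)^m * (a:ℚ)

namespace DD
variable {p : ℕ} {m n : ℕ} {x y : ℚ}

lemma zero (hp : p.Prime) (m : ℕ) : DD p m 0 :=
  ⟨0, 1, by simpa using (Nat.prime_iff_prime_int.mp hp).not_dvd_one, by simp⟩

lemma add (hp : p.Prime) (hx : DD p m x) (hy : DD p m y) : DD p m (x + y) := by
  obtain ⟨a₁, b₁, hb₁, h₁⟩ := hx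
  obtain ⟨a₂, b₂, hb₂, h₂⟩ := hy
  refine ⟨a₁ * b₂ + a₂ * b₁, b₁ * b₂, ?_, ?_⟩
  · intro h
    rcases (Nat.prime_iff_prime_int.mp hp).dvd_mul.mp h with h | h
    exacts [hb₁ h, hb₂ h]
  · push_cast
    linear_combination (b₂:ℚ) * h₁ + (b₁:ℚ) * h₂

lemma neg (hx : DD p m x) : DD p m (-x) := by
  obtain ⟨a, b, hb, h⟩ := hx
  exact ⟨-a, b, hb, by push_cast; linear_combination -h⟩

lemma sub (hp : p.Prime) (hx : DD p m x) (hy : DD p m y) : DD p m (x - y) := by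
  simpa [sub_eq_add_neg] using hx.add hp hy.neg

lemma mul (hp : p.Prime) (hx : DD p m x) (hy : DD p n y) : DD p (m + n) (x * y) := by
  obtain ⟨a₁, b₁, hb₁, h₁⟩ := hx
  obtain ⟨a₂, b₂, hb₂, h₂⟩ := hy
  refine ⟨a₁ * a₂, b₁ * b₂, ?_, ?_⟩
  · intro h
    rcases (Nat.prime_iff_prime_int.mp hp).dvd_mul.mp h with h | h
    exacts [hb₁ h, hb₂ h]
  · push_cast
    rw [pow_add]
    linear_combination (y * b₂) * h₁ + ((p:ℚ)^m * a₁) * h₂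

lemma weaken (h : n ≤ m) (hx : DD p m x) : DD p n x := by
  obtain ⟨a, b, hb, hx⟩ := hx
  obtain ⟨k, rfl⟩ := Nat.exists_eq_add_of_le h
  refine ⟨p ^ k * a, b, hb, ?_⟩
  rw [hx, pow_add]
  push_cast
  ring

lemma congr {y : ℚ} (hx : DD p m x) (he : y = x) : DD p m y := he ▸ hx

lemma sum (hp : p.Prime) {S : Finset ℕ} {f : ℕ → ℚ}
    (h : ∀ i ∈ S, DD p m (f i)) : DD p m (∑ i ∈ S, f i) :=
  Finset.sum_induction f (DD p m) (fun _ _ ha hb => ha.add hp hb) (DD.zero hp m) h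

lemma num (hp : p.Prime) (hx : DD p m x) : (p:ℤ)^m ∣ x.num := by
  obtain ⟨a, b, hb, h⟩ := hx
  have hint : (x.num * b : ℚ) = ((p:ℤ)^m * a * x.den : ℤ) := by
    push_cast
    rw [mul_comm (x.num:ℚ)]
    rw [← Rat.num_div_den x] at h
    field_simp at h
    linear_combination h
  have hz : x.num * b = (p:ℤ)^m * a * x.den := by exact_mod_cast hint
  have hcop : IsCoprime ((p:ℤ)) b := (Prime.coprime_iff_not_dvd (Nat.prime_iff_prime_int.mp hp)).mpr hb
  exact (hcop.pow_left).dvd_of_dvd_mul_right ⟨a * x.den, by linarith [hz]⟩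

end DD

lemma sum_id_q (n : ℕ) : ∑ k ∈ range n, (k:ℚ) = n * ((n:ℚ) - 1) / 2 := by
  induction n with
  | zero => simp
  | succ n ih => rw [Finset.sum_range_succ, ih]; push_cast; ring

lemma sum_sq_q (n : ℕ) : ∑ k ∈ range n, (k:ℚ)^2 = n * ((n:ℚ) - 1) * (2*n - 1) / 6 := by
  induction n with
  | zero => simp
  | succ n ih => rw [Finset.sum_range_succ, ih]; push_cast; ring

lemma sum_range_mul_q (f : ℕ → ℚ) (m n : ℕ) :
    ∑ k ∈ range (m * n), f k = ∑ i ∈ range m, ∑ j ∈ range n, f (n * i + j) := by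
  induction m with
  | zero => simp
  | succ m ih =>
    rw [Finset.sum_range_succ, ← ih, Nat.succ_mul, mul_comm n m]
    have h1 : ∑ k ∈ range (m*n + n), f k = ∑ k ∈ Finset.Ico 0 (m*n), f k + ∑ k ∈ Finset.Ico (m*n) (m*n+n), f k := by
      rw [Finset.sum_Ico_consecutive _ (Nat.zero_le (m*n)) (Nat.le_add_right (m*n) n), Finset.range_eq_Ico]
    rw [h1, ← Finset.range_eq_Ico, Finset.sum_Ico_eq_sum_range, Nat.add_sub_cancel_left]

-- helpers about linear forms
lemma not_dvd_lin {p : ℕ} {s : ℤ} (hps : ¬(p:ℤ) ∣ s) (k : ℕ) :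
    ¬ (p:ℤ) ∣ ((k:ℤ) * p + s) := by
  intro h
  exact hps ((dvd_add_right (Dvd.intro_left _ rfl)).mp h)

lemma lin_ne {p : ℕ} {s : ℤ} (hps : ¬(p:ℤ) ∣ s) (k : ℕ) :
    ((k:ℚ) * (p:ℚ) + (s:ℚ)) ≠ 0 := by
  intro h
  apply not_dvd_lin hps k
  have : ((k:ℤ) * p + s : ℤ) = 0 := by exact_mod_cast (by push_cast at h ⊢; linarith : ((k:ℤ)*(p:ℤ)+(s:ℤ) : ℚ) = 0)
  rw [this]; exact dvd_zero _

lemma cast_int_ne {p : ℕ} {s : ℤ} (hp : p.Prime) (hps : ¬(p:ℤ) ∣ s) : (s:ℚ) ≠ 0 := by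
  intro h
  have : s = 0 := by exact_mod_cast h
  rw [this] at hps; exact hps (dvd_zero _)



section Base
variable {p : ℕ} {s : ℤ}

/-- Base-case expansion: `U p s u 2` equals the closed form up to a `p^3`-divisible error. -/
lemma base_expand (hp : p.Prime) (hps : ¬(p:ℤ) ∣ s) (u : ℕ) :
    DD p 3 (U p s u 2 -
      ((u*p : ℚ)/s - (p:ℚ)*((u*p:ℚ)*((u*p:ℚ)-1)/2)/s^2
        + (p:ℚ)^2*((u*p:ℚ)*((u*p:ℚ)-1)*(2*(u*p:ℚ)-1)/6)/s^3)) := by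
  have hs : (s:ℚ) ≠ 0 := cast_int_ne hp hps
  have hg : ∑ k ∈ range (u*p), ((1:ℚ)/s + (-(p/s^2))*(k:ℚ) + (p^2/s^3)*(k:ℚ)^2)
      = ((u*p : ℚ)/s - (p:ℚ)*((u*p:ℚ)*((u*p:ℚ)-1)/2)/s^2
        + (p:ℚ)^2*((u*p:ℚ)*((u*p:ℚ)-1)*(2*(u*p:ℚ)-1)/6)/s^3) := by
    rw [Finset.sum_add_distrib, Finset.sum_add_distrib, Finset.sum_const,
      ← Finset.mul_sum, ← Finset.mul_sum, sum_id_q, sum_sq_q, nsmul_eq_mul,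
      Finset.card_range]
    push_cast
    ring
  have hU : U p s u 2 = ∑ k ∈ range (u*p), 1 / ((k : ℚ) * (p : ℚ) + (s : ℚ)) := by
    simp [U, pow_one]
  rw [← hg, hU, ← Finset.sum_sub_distrib]
  apply DD.sum hp
  intro k _
  refine ⟨-(k:ℤ)^3, s^3 * ((k:ℤ)*p + s), ?_, ?_⟩
  · intro h
    rcases (Nat.prime_iff_prime_int.mp hp).dvd_mul.mp h with h | h
    · exact hps ((Nat.prime_iff_prime_int.mp hp).dvd_of_dvd_pow h)
    · exact not_dvd_lin hps k h
  · have hk := lin_ne hps k (p := p) (s := s)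
    push_cast
    field_simp
    ring
end Base

section BaseCases
variable {p : ℕ} {s : ℤ}

lemma not_dvd_six (hp : p.Prime) (h5 : 5 ≤ p) : ¬ (p:ℤ) ∣ 6 := by
  intro h
  have h6 : p ∣ 6 := by exact_mod_cast Int.ofNat_dvd.mpr (by exact_mod_cast h)
  have := Nat.le_of_dvd (by norm_num) h6
  interval_cases p <;> first | exact absurd h6 (by decide) | exact absurd hp (by decide)

lemma base_five (hp : p.Prime) (h5 : 5 ≤ p) (hps : ¬(p:ℤ) ∣ s) (u : ℕ) :
    DD p 3 (U p s u 2 - ((u:ℚ)*p/s + ((u:ℚ)/(2*s^2))*(p:ℚ)^2)) := by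
  have hs : (s:ℚ) ≠ 0 := cast_int_ne hp hps
  have h1 := base_expand hp hps u
  have h2 : DD p 3 (((u*p : ℚ)/s - (p:ℚ)*((u*p:ℚ)*((u*p:ℚ)-1)/2)/s^2
        + (p:ℚ)^2*((u*p:ℚ)*((u*p:ℚ)-1)*(2*(u*p:ℚ)-1)/6)/s^3)
      - ((u:ℚ)*p/s + ((u:ℚ)/(2*s^2))*(p:ℚ)^2)) := by
    refine ⟨-3*(u:ℤ)^2*s + u*((u:ℤ)*p-1)*(2*(u:ℤ)*p-1), 6*s^3, ?_, ?_⟩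
    · intro h
      rcases (Nat.prime_iff_prime_int.mp hp).dvd_mul.mp h with h | h
      · exact not_dvd_six hp h5 h
      · exact hps ((Nat.prime_iff_prime_int.mp hp).dvd_of_dvd_pow h)
    · push_cast
      field_simp
      ring
  exact (h1.add hp h2).congr (by ring)

lemma base_three {s : ℤ} (hps : ¬(3:ℤ) ∣ s) (u : ℕ) :
    DD 3 3 (U 3 s u 2 - ((u:ℚ)*3/s + ((u:ℚ)*((s:ℚ)+1)/(2*s^3))*(3:ℚ)^2)) := by
  have hp : Nat.Prime 3 := by norm_num
  have hs : (s:ℚ) ≠ 0 := cast_int_ne hp (by exact_mod_cast hps)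
  have h1 := base_expand hp (by exact_mod_cast hps) u
  have h2 : DD 3 3 ((((u*3 : ℚ))/s - (3:ℚ)*((u*3:ℚ)*((u*3:ℚ)-1)/2)/s^2
        + (3:ℚ)^2*((u*3:ℚ)*((u*3:ℚ)-1)*(2*(u*3:ℚ)-1)/6)/s^3)
      - ((u:ℚ)*3/s + ((u:ℚ)*((s:ℚ)+1)/(2*s^3))*(3:ℚ)^2)) := by
    refine ⟨-(u:ℤ)^2*s + 3*(u:ℤ)^2*(2*(u:ℤ)-1), 2*s^3, ?_, ?_⟩
    · intro h
      rcases (Nat.prime_iff_prime_int.mp hp).dvd_mul.mp h with h | h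
      · norm_num at h
      · exact (by exact_mod_cast hps : ¬(3:ℤ)∣s) ((Nat.prime_iff_prime_int.mp hp).dvd_of_dvd_pow h)
    · push_cast
      field_simp
      ring
  exact (h1.add hp h2).congr (by push_cast; ring)
end BaseCases

section Step
variable {p : ℕ} {s : ℤ}

lemma shift_not_dvd (hps : ¬(p:ℤ) ∣ s) (c : ℤ) (m : ℕ) : ¬ (p:ℤ) ∣ (s + c * p^(m+1)) := by
  intro h
  apply hps
  have hd : (p:ℤ) ∣ c * p^(m+1) := ⟨c * p^m, by ring⟩
  exact (dvd_add_right hd).mp (by rwa [add_comm] at h)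

lemma lin_shift_ne (hps : ¬(p:ℤ) ∣ s) (i u m j : ℕ) :
    (j:ℚ)*p + s + (i:ℚ)*u*(p:ℚ)^(m+1) ≠ 0 := by
  have h := lin_ne (shift_not_dvd hps ((i:ℤ)*u) m) j
  intro h0
  apply h
  push_cast
  linear_combination h0

/-- the inner sums after splitting the range of `U p s u (n+3)` into `p` blocks -/
def Wf (p : ℕ) (s : ℤ) (u n i : ℕ) : ℚ :=
  ∑ j ∈ range (u*p^(n+1)), 1/((j:ℚ)*p + s + (i:ℚ)*u*(p:ℚ)^(n+2))

def Vf (p : ℕ) (s : ℤ) (u n i : ℕ) : ℚ :=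
  ∑ j ∈ range (u*p^(n+1)), 1/(((j:ℚ)*p + s)*((j:ℚ)*p + s + (i:ℚ)*u*(p:ℚ)^(n+2)))

lemma W_split (u n : ℕ) : U p s u (n+3) = ∑ i ∈ range p, Wf p s u n i := by
  have hsize : u * p^(n+3-1) = p * (u * p^(n+1)) := by
    show u * p^(n+2) = _
    ring
  rw [U, hsize, sum_range_mul_q]
  apply Finset.sum_congr rfl
  intro i _
  apply Finset.sum_congr rfl
  intro j _
  congr 1
  push_cast
  ring

lemma W_zero (u n : ℕ) : Wf p s u n 0 = U p s u (n+2) := by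
  rw [Wf, U]
  apply Finset.sum_congr rfl
  intro j _
  norm_num

lemma W_sub (hps : ¬(p:ℤ) ∣ s) (u n i : ℕ) :
    Wf p s u n i - Wf p s u n 0 =
      -((i:ℚ)*u*(p:ℚ)^(n+2) * Vf p s u n i) := by
  rw [Wf, Wf, Vf, ← Finset.sum_sub_distrib, Finset.mul_sum, ← Finset.sum_neg_distrib]
  apply Finset.sum_congr rfl
  intro j _
  have h1 : (j:ℚ)*p + s ≠ 0 := lin_ne hps j
  have h2 : (j:ℚ)*p + s + (i:ℚ)*u*(p:ℚ)^(n+2) ≠ 0 := lin_shift_ne hps i u (n+1) j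
  rw [show ((j:ℚ)*p + s + (0:ℕ)*u*(p:ℚ)^(n+2)) = (j:ℚ)*p + s by norm_num]
  field_simp
  try ring

lemma V_zero_dd (hp : p.Prime) (hps : ¬(p:ℤ) ∣ s) (u n : ℕ) :
    DD p 1 (Vf p s u n 0) := by
  have hs : (s:ℚ) ≠ 0 := cast_int_ne hp hps
  have h0 : Vf p s u n 0 = ∑ j ∈ range (u*p^(n+1)),
      ((1:ℚ)/s^2 + (1/((j:ℚ)*p+s)^2 - 1/s^2)) := by
    rw [Vf]
    apply Finset.sum_congr rfl
    intro j _
    have h1 : (j:ℚ)*p + s ≠ 0 := lin_ne hps j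
    push_cast
    rw [zero_mul, zero_mul, add_zero]
    field_simp
    ring
  rw [h0, Finset.sum_add_distrib, Finset.sum_const, Finset.card_range, nsmul_eq_mul]
  apply DD.add hp
  · refine ⟨(u:ℤ)*p^n, s^2, ?_, ?_⟩
    · intro h
      exact hps ((Nat.prime_iff_prime_int.mp hp).dvd_of_dvd_pow h)
    · push_cast
      field_simp
      ring
  · apply DD.sum hp
    intro j _
    have h1 : (j:ℚ)*p + s ≠ 0 := lin_ne hps j
    refine ⟨-((j:ℤ)*((j:ℤ)*p + 2*s)), s^2*((j:ℤ)*p+s)^2, ?_, ?_⟩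
    · intro h
      rcases (Nat.prime_iff_prime_int.mp hp).dvd_mul.mp h with h | h
      · exact hps ((Nat.prime_iff_prime_int.mp hp).dvd_of_dvd_pow h)
      · exact not_dvd_lin hps j ((Nat.prime_iff_prime_int.mp hp).dvd_of_dvd_pow h)
    · push_cast
      field_simp
      ring

lemma V_diff_dd (hp : p.Prime) (hps : ¬(p:ℤ) ∣ s) (u n i : ℕ) :
    DD p (n+2) ((i:ℚ) * (Vf p s u n i - Vf p s u n 0)) := by
  have hs : (s:ℚ) ≠ 0 := cast_int_ne hp hps
  have h0 : (i:ℚ) * (Vf p s u n i - Vf p s u n 0) = ∑ j ∈ range (u*p^(n+1)),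
      (i:ℚ) * (1/(((j:ℚ)*p + s)*((j:ℚ)*p + s + (i:ℚ)*u*(p:ℚ)^(n+2)))
        - 1/(((j:ℚ)*p+s)^2)) := by
    rw [Vf, Vf, ← Finset.sum_sub_distrib, Finset.mul_sum]
    apply Finset.sum_congr rfl
    intro j _
    have : ((j:ℚ)*p + s + (0:ℕ)*u*(p:ℚ)^(n+2)) = (j:ℚ)*p + s := by norm_num
    rw [this, ← sq]
  rw [h0]
  apply DD.sum hp
  intro j _
  have h1 : (j:ℚ)*p + s ≠ 0 := lin_ne hps j
  have h2 : (j:ℚ)*p + s + (i:ℚ)*u*(p:ℚ)^(n+2) ≠ 0 := lin_shift_ne hps i u (n+1) j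
  refine ⟨-((i:ℤ)^2*u), ((j:ℤ)*p+s)^2 * ((j:ℤ)*p + (s + (i:ℤ)*u*p^(n+2))), ?_, ?_⟩
  · intro h
    rcases (Nat.prime_iff_prime_int.mp hp).dvd_mul.mp h with h | h
    · exact not_dvd_lin hps j ((Nat.prime_iff_prime_int.mp hp).dvd_of_dvd_pow h)
    · exact not_dvd_lin (shift_not_dvd hps ((i:ℤ)*u) (n+1)) j h
  · push_cast
    field_simp
    ring

lemma step_dd (hp : p.Prime) (hodd : Odd p) (hps : ¬(p:ℤ) ∣ s) (u n : ℕ) :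
    DD p (n+4) (U p s u (n+3) - (p:ℚ) * U p s u (n+2)) := by
  have hE : U p s u (n+3) - (p:ℚ) * U p s u (n+2) =
      -(((u:ℚ)*(p:ℚ)^(n+2)) *
        (((p:ℚ)*((p:ℚ)-1)/2) * Vf p s u n 0
          + ∑ i ∈ range p, (i:ℚ)*(Vf p s u n i - Vf p s u n 0))) := by
    have h1 : U p s u (n+3) - (p:ℚ) * U p s u (n+2)
        = ∑ i ∈ range p, (Wf p s u n i - Wf p s u n 0) := by
      rw [W_split, Finset.sum_sub_distrib, Finset.sum_const, Finset.card_range,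
        nsmul_eq_mul, W_zero]
    rw [h1]
    have h2 : ∀ i ∈ range p, Wf p s u n i - Wf p s u n 0 =
        -((u:ℚ)*(p:ℚ)^(n+2) * ((i:ℚ) * Vf p s u n i)) := by
      intro i _
      rw [W_sub hps]
      ring
    rw [Finset.sum_congr rfl h2]
    have h3 : ∑ i ∈ range p, -((u:ℚ)*(p:ℚ)^(n+2) * ((i:ℚ) * Vf p s u n i))
        = -((u:ℚ)*(p:ℚ)^(n+2) * ∑ i ∈ range p, (i:ℚ) * Vf p s u n i) := by
      rw [Finset.mul_sum, ← Finset.sum_neg_distrib]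
    rw [h3]
    congr 1
    congr 1
    have h4 : ∀ i ∈ range p, (i:ℚ) * Vf p s u n i
        = (i:ℚ) * Vf p s u n 0 + (i:ℚ)*(Vf p s u n i - Vf p s u n 0) := by
      intro i _; ring
    rw [Finset.sum_congr rfl h4, Finset.sum_add_distrib, ← Finset.sum_mul, sum_id_q]
  rw [hE]
  apply DD.neg
  have hA : DD p (n+2) ((u:ℚ)*(p:ℚ)^(n+2)) :=
    ⟨u, 1, by simpa using (Nat.prime_iff_prime_int.mp hp).not_dvd_one, by push_cast; ring⟩
  have hB : DD p 2 (((p:ℚ)*((p:ℚ)-1)/2) * Vf p s u n 0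
      + ∑ i ∈ range p, (i:ℚ)*(Vf p s u n i - Vf p s u n 0)) := by
    apply DD.add hp
    · obtain ⟨w, hw⟩ := hodd
      have hw1 : DD p 1 ((p:ℚ)*((p:ℚ)-1)/2) :=
        ⟨w, 1, by simpa using (Nat.prime_iff_prime_int.mp hp).not_dvd_one,
          by push_cast [hw]; ring⟩
      exact (hw1.mul hp (V_zero_dd hp hps u n) : DD p (1+1) _)
    · apply DD.sum hp
      intro i _
      exact (V_diff_dd hp hps u n i).weaken (by omega)
  exact ((hA.mul hp hB).congr (by ring) : DD p ((n+2)+2) _).weaken (by omega)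
end Step

section Key
variable {p : ℕ} {s : ℤ}

lemma key_dd (hp : p.Prime) (hodd : Odd p) (hps : ¬(p:ℤ) ∣ s) (u : ℕ) (e : ℚ)
    (hbase : DD p 3 (U p s u 2 - ((u:ℚ)*(p:ℚ)/s + e*(p:ℚ)^2))) (n : ℕ) :
    DD p (n+3) (U p s u (n+2) - ((u:ℚ)*(p:ℚ)^(n+1)/s + e*(p:ℚ)^(n+2))) := by
  induction n with
  | zero => simpa using hbase
  | succ n ih =>
    have h1 := step_dd hp hodd hps u n
    have hpdd : DD p 1 ((p:ℚ)) :=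
      ⟨1, 1, by simpa using (Nat.prime_iff_prime_int.mp hp).not_dvd_one, by push_cast; ring⟩
    have h2 : DD p (n+4) ((p:ℚ) * (U p s u (n+2) - ((u:ℚ)*(p:ℚ)^(n+1)/s + e*(p:ℚ)^(n+2)))) := by
      have := hpdd.mul hp ih
      rwa [show 1 + (n+3) = n+4 by omega] at this
    have h3 := h1.add hp h2
    rw [show n+1+3 = n+4 by omega]
    exact h3.congr (by push_cast; ring)

lemma not_dvd_two (hp : p.Prime) (hodd : Odd p) : ¬ (p:ℤ) ∣ 2 := by
  intro h
  have h2 : p ∣ 2 := by exact_mod_cast h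
  have := (Nat.prime_dvd_prime_iff_eq hp Nat.prime_two).mp h2
  rw [this] at hodd
  exact absurd hodd (by decide)
end Key


set_option maxHeartbeats 1000000 in
/-- **Lemma 2.3(d).** For `r ≥ 2`: if `p ≥ 5` then
`U(s;u,p^r)·U(t;v,p^r) ≡ uv s⁻¹ t⁻¹ p^{2r-2} + ½(uv s⁻¹ t⁻² + uv s⁻² t⁻¹) p^{2r-1}
(mod p^{2r})`, and if `p = 3` then
`U(s;u,3^r)·U(t;v,3^r) ≡ uv s⁻¹ t⁻¹ 3^{2r-2} + ½(uv s⁻¹ t⁻³(t+1) + uv s⁻³(s+1) t⁻¹) 3^{2r-1}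
(mod 3^{2r})`. -/
theorem U_product_evaluation
    (p u v : ℕ) (s t : ℤ)
    (hp : p.Prime) (hpodd : Odd p) (hu : 0 < u) (hv : 0 < v)
    (hps : ¬ (p : ℤ) ∣ s) (hpt : ¬ (p : ℤ) ∣ t) :
    ∀ r : ℕ, 2 ≤ r →
      (5 ≤ p →
        (p : ℤ) ^ (2 * r) ∣
          (U p s u r * U p t v r -
            ((u : ℚ) * (v : ℚ) * (s : ℚ)⁻¹ * (t : ℚ)⁻¹ * (p : ℚ) ^ (2 * r - 2) +
             ((u : ℚ) * (v : ℚ) * (s : ℚ)⁻¹ * ((t : ℚ) ^ 2)⁻¹ +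
              (u : ℚ) * (v : ℚ) * ((s : ℚ) ^ 2)⁻¹ * (t : ℚ)⁻¹) / 2 *
               (p : ℚ) ^ (2 * r - 1))).num) ∧
      (p = 3 →
        (3 : ℤ) ^ (2 * r) ∣
          (U 3 s u r * U 3 t v r -
            ((u : ℚ) * (v : ℚ) * (s : ℚ)⁻¹ * (t : ℚ)⁻¹ * (3 : ℚ) ^ (2 * r - 2) +
             ((u : ℚ) * (v : ℚ) * (s : ℚ)⁻¹ * ((t : ℚ) ^ 3)⁻¹ * ((t : ℚ) + 1) +
              (u : ℚ) * (v : ℚ) * ((s : ℚ) ^ 3)⁻¹ * ((s : ℚ) + 1) * (t : ℚ)⁻¹) / 2 *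
               (3 : ℚ) ^ (2 * r - 1))).num) := by
  intro r hr
  obtain ⟨n, rfl⟩ : ∃ n, r = n + 2 := ⟨r - 2, by omega⟩
  have hs : (s:ℚ) ≠ 0 := cast_int_ne hp hps
  have ht : (t:ℚ) ≠ 0 := cast_int_ne hp hpt
  have hexp2 : 2*(n+2) - 2 = 2*n+2 := by omega
  have hexp1 : 2*(n+2) - 1 = 2*n+3 := by omega
  have hexp0 : 2*(n+2) = 2*n+4 := by omega
  constructor
  · -- case p ≥ 5
    intro h5
    have hp2 : ¬ (p:ℤ) ∣ 2 := not_dvd_two hp hpodd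
    have hs' := key_dd hp hpodd hps u ((u:ℚ)/(2*(s:ℚ)^2)) (base_five hp h5 hps u) n
    have ht' := key_dd hp hpodd hpt v ((v:ℚ)/(2*(t:ℚ)^2)) (base_five hp h5 hpt v) n
    set As : ℚ := (u:ℚ)*(p:ℚ)^(n+1)/s + ((u:ℚ)/(2*(s:ℚ)^2))*(p:ℚ)^(n+2) with hAs_def
    set At : ℚ := (v:ℚ)*(p:ℚ)^(n+1)/t + ((v:ℚ)/(2*(t:ℚ)^2))*(p:ℚ)^(n+2) with hAt_def
    have hAs : DD p (n+1) As := by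
      refine ⟨2*(u:ℤ)*s + u*p, 2*s^2, ?_, ?_⟩
      · intro h
        rcases (Nat.prime_iff_prime_int.mp hp).dvd_mul.mp h with h | h
        · exact hp2 h
        · exact hps ((Nat.prime_iff_prime_int.mp hp).dvd_of_dvd_pow h)
      · rw [hAs_def]; push_cast; field_simp; ring
    have hAt : DD p (n+1) At := by
      refine ⟨2*(v:ℤ)*t + v*p, 2*t^2, ?_, ?_⟩
      · intro h
        rcases (Nat.prime_iff_prime_int.mp hp).dvd_mul.mp h with h | h
        · exact hp2 h
        · exact hpt ((Nat.prime_iff_prime_int.mp hp).dvd_of_dvd_pow h)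
      · rw [hAt_def]; push_cast; field_simp; ring
    rw [hexp2, hexp1, hexp0]
    set T : ℚ := ((u : ℚ) * (v : ℚ) * (s : ℚ)⁻¹ * (t : ℚ)⁻¹ * (p : ℚ) ^ (2*n+2) +
             ((u : ℚ) * (v : ℚ) * (s : ℚ)⁻¹ * ((t : ℚ) ^ 2)⁻¹ +
              (u : ℚ) * (v : ℚ) * ((s : ℚ) ^ 2)⁻¹ * (t : ℚ)⁻¹) / 2 *
               (p : ℚ) ^ (2*n+3)) with hT_def
    have h4 : DD p (2*n+4) (As*At - T) := by
      refine ⟨(u:ℤ)*v, 4*s^2*t^2, ?_, ?_⟩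
      · intro h
        rcases (Nat.prime_iff_prime_int.mp hp).dvd_mul.mp h with h | h
        · rcases (Nat.prime_iff_prime_int.mp hp).dvd_mul.mp h with h | h
          · refine hp2 ((Nat.prime_iff_prime_int.mp hp).dvd_of_dvd_pow (n := 2) ?_)
            rw [show (2:ℤ)^2 = 4 by norm_num]
            exact h
          · exact hps ((Nat.prime_iff_prime_int.mp hp).dvd_of_dvd_pow h)
        · exact hpt ((Nat.prime_iff_prime_int.mp hp).dvd_of_dvd_pow h)
      · rw [hAs_def, hAt_def, hT_def]; push_cast; field_simp; ring
    have hdec : U p s u (n+2) * U p t v (n+2) - T =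
        (U p s u (n+2) - As)*(U p t v (n+2) - At) + As*(U p t v (n+2) - At)
          + (U p s u (n+2) - As)*At + (As*At - T) := by ring
    have t1 : DD p (2*n+4) ((U p s u (n+2) - As)*(U p t v (n+2) - At)) := by
      have := hs'.mul hp ht'
      exact this.weaken (by omega)
    have t2 : DD p (2*n+4) (As*(U p t v (n+2) - At)) := by
      have := hAs.mul hp ht'
      rwa [show (n+1)+(n+3) = 2*n+4 by omega] at this
    have t3 : DD p (2*n+4) ((U p s u (n+2) - As)*At) := by
      have := hs'.mul hp hAt
      rwa [show (n+3)+(n+1) = 2*n+4 by omega] at this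
    have hdd : DD p (2*n+4) (U p s u (n+2) * U p t v (n+2) - T) := by
      rw [hdec]
      exact ((t1.add hp t2).add hp t3).add hp h4
    exact hdd.num hp
  · -- case p = 3
    intro hp3
    subst hp3
    have hp2 : ¬ ((3:ℕ):ℤ) ∣ 2 := not_dvd_two hp hpodd
    have hs' := key_dd hp hpodd hps u ((u:ℚ)*((s:ℚ)+1)/(2*(s:ℚ)^3)) (base_three hps u) n
    have ht' := key_dd hp hpodd hpt v ((v:ℚ)*((t:ℚ)+1)/(2*(t:ℚ)^3)) (base_three hpt v) n
    set As : ℚ := (u:ℚ)*((3:ℕ):ℚ)^(n+1)/s + ((u:ℚ)*((s:ℚ)+1)/(2*(s:ℚ)^3))*((3:ℕ):ℚ)^(n+2) with hAs_def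
    set At : ℚ := (v:ℚ)*((3:ℕ):ℚ)^(n+1)/t + ((v:ℚ)*((t:ℚ)+1)/(2*(t:ℚ)^3))*((3:ℕ):ℚ)^(n+2) with hAt_def
    have hAs : DD 3 (n+1) As := by
      refine ⟨2*(u:ℤ)*s^2 + 3*u*(s+1), 2*s^3, ?_, ?_⟩
      · intro h
        rcases (Nat.prime_iff_prime_int.mp hp).dvd_mul.mp h with h | h
        · exact hp2 h
        · exact hps ((Nat.prime_iff_prime_int.mp hp).dvd_of_dvd_pow h)
      · rw [hAs_def]; push_cast; field_simp; ring
    have hAt : DD 3 (n+1) At := by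
      refine ⟨2*(v:ℤ)*t^2 + 3*v*(t+1), 2*t^3, ?_, ?_⟩
      · intro h
        rcases (Nat.prime_iff_prime_int.mp hp).dvd_mul.mp h with h | h
        · exact hp2 h
        · exact hpt ((Nat.prime_iff_prime_int.mp hp).dvd_of_dvd_pow h)
      · rw [hAt_def]; push_cast; field_simp; ring
    rw [hexp2, hexp1, hexp0]
    set T : ℚ := ((u : ℚ) * (v : ℚ) * (s : ℚ)⁻¹ * (t : ℚ)⁻¹ * (3 : ℚ) ^ (2*n+2) +
             ((u : ℚ) * (v : ℚ) * (s : ℚ)⁻¹ * ((t : ℚ) ^ 3)⁻¹ * ((t : ℚ) + 1) +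
              (u : ℚ) * (v : ℚ) * ((s : ℚ) ^ 3)⁻¹ * ((s : ℚ) + 1) * (t : ℚ)⁻¹) / 2 *
               (3 : ℚ) ^ (2*n+3)) with hT_def
    have h4 : DD 3 (2*n+4) (As*At - T) := by
      refine ⟨(u:ℤ)*(s+1)*v*(t+1), 4*s^3*t^3, ?_, ?_⟩
      · intro h
        rcases (Nat.prime_iff_prime_int.mp hp).dvd_mul.mp h with h | h
        · rcases (Nat.prime_iff_prime_int.mp hp).dvd_mul.mp h with h | h
          · refine hp2 ((Nat.prime_iff_prime_int.mp hp).dvd_of_dvd_pow (n := 2) ?_)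
            rw [show (2:ℤ)^2 = 4 by norm_num]
            exact h
          · exact hps ((Nat.prime_iff_prime_int.mp hp).dvd_of_dvd_pow h)
        · exact hpt ((Nat.prime_iff_prime_int.mp hp).dvd_of_dvd_pow h)
      · rw [hAs_def, hAt_def, hT_def, show ((3:ℕ):ℚ) = (3:ℚ) by norm_num]
        push_cast; field_simp; ring
    have hdec : U 3 s u (n+2) * U 3 t v (n+2) - T =
        (U 3 s u (n+2) - As)*(U 3 t v (n+2) - At) + As*(U 3 t v (n+2) - At)
          + (U 3 s u (n+2) - As)*At + (As*At - T) := by ring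
    have t1 : DD 3 (2*n+4) ((U 3 s u (n+2) - As)*(U 3 t v (n+2) - At)) := by
      have := hs'.mul hp ht'
      exact this.weaken (by omega)
    have t2 : DD 3 (2*n+4) (As*(U 3 t v (n+2) - At)) := by
      have := hAs.mul hp ht'
      rwa [show (n+1)+(n+3) = 2*n+4 by omega] at this
    have t3 : DD 3 (2*n+4) ((U 3 s u (n+2) - As)*At) := by
      have := hs'.mul hp hAt
      rwa [show (n+3)+(n+1) = 2*n+4 by omega] at this
    have hdd : DD 3 (2*n+4) (U 3 s u (n+2) * U 3 t v (n+2) - T) := by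
      rw [hdec]
      exact ((t1.add hp t2).add hp t3).add hp h4
    have := hdd.num hp
    exact_mod_cast this
end
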